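/- Main theorem (finite case): a plausibility measure $\Pl$ on a test space $(X,\Sigma)$ with $X$ finite agrees with some probability measure $\mu$ (i.e., $\Pl(A)\preceq\Pl(B) \iff \mu(A)\leq\mu(B)$) if and only if the image of $\Pl$ is totally ordered and $\Pl$ is Archimedean. -/

import Mathlib

open Finset

/-- A (locally finite) test space: a set of finite tests covering the outcome set. -/
structure TSpace (X : Type*) where
  tests : Set (Finset X)
  covers : ∀ x : X, ∃ T ∈ tests, x ∈ T

/-- An event is a subset of some test. -/
def TSpace.IsEvent {X : Type*} (S : TSpace X) (A : Finset X) : Prop :=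
  ∃ T ∈ S.tests, A ⊆ T

/-- A probability measure on a test space. -/
def IsProbMeasure {X : Type*} (S : TSpace X) (μ : X → ℝ) : Prop :=
  (∀ x, 0 ≤ μ x) ∧ ∀ T ∈ S.tests, ∑ x ∈ T, μ x = 1

/-- Extension of a probability measure to events. -/
def mval {X : Type*} (μ : X → ℝ) (A : Finset X) : ℝ := ∑ x ∈ A, μ x

/-- A plausibility measure on a test space, valued in a poset `D`. -/
structure PlausMeasure {X : Type*} (S : TSpace X) (D : Type*) [PartialOrder D] where
  Pl : Finset X → D
  eq_tests : ∀ T ∈ S.tests, ∀ R ∈ S.tests, Pl T = Pl R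
  mono : ∀ A B : Finset X, S.IsEvent B → A ⊆ B → Pl A ≤ Pl B
  pos : ∀ T ∈ S.tests, Pl ∅ < Pl T

open scoped Classical in
/-- The Archimedean condition for a plausibility assignment. -/
def IsArch {X D : Type*} [PartialOrder D] (S : TSpace X) (Pl : Finset X → D) : Prop :=
  ∀ (n : ℕ) (A B : Fin (n + 1) → Finset X),
    (∀ i, S.IsEvent (A i)) → (∀ i, S.IsEvent (B i)) →
    (∀ x : X, (univ.filter fun i => x ∈ A i).card = (univ.filter fun i => x ∈ B i).card) →
    (∀ i : Fin n, Pl (A i.castSucc) ≤ Pl (B i.castSucc)) →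
    Pl (B (Fin.last n)) ≤ Pl (A (Fin.last n))


section Farkas
variable {ι : Type*} [Fintype ι]

/-- dot product of rational vectors -/
def dotq (y v : ι → ℚ) : ℚ := ∑ i, y i * v i

lemma dotq_smul_right (y v : ι → ℚ) (a : ℚ) : dotq y (a • v) = a * dotq y v := by
  simp only [dotq, Finset.mul_sum, Pi.smul_apply, smul_eq_mul]
  exact Finset.sum_congr rfl fun i _ => by ring

lemma dotq_sub_right (y v w : ι → ℚ) : dotq y (v - w) = dotq y v - dotq y w := by
  simp only [dotq, ← Finset.sum_sub_distrib, Pi.sub_apply]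
  exact Finset.sum_congr rfl fun i _ => by ring

lemma dotq_sub_left (y z v : ι → ℚ) : dotq (y - z) v = dotq y v - dotq z v := by
  simp only [dotq, ← Finset.sum_sub_distrib, Pi.sub_apply]
  exact Finset.sum_congr rfl fun i _ => by ring

lemma dotq_smul_left (y v : ι → ℚ) (a : ℚ) : dotq (a • y) v = a * dotq y v := by
  simp only [dotq, Finset.mul_sum, Pi.smul_apply, smul_eq_mul]
  exact Finset.sum_congr rfl fun i _ => by ring

lemma dotq_sum (y : ι → ℚ) {n : ℕ} (g : Fin n → ι → ℚ) :
    dotq y (∑ i, g i) = ∑ i, dotq y (g i) := by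
  simp only [dotq, Finset.sum_apply, Finset.mul_sum]
  rw [Finset.sum_comm]

lemma dotq_self_neg (c : ι → ℚ) (hc : c ≠ 0) : dotq (-c) c < 0 := by
  have hpos : 0 < dotq c c := by
    rcases Function.ne_iff.mp hc with ⟨i, hi⟩
    have hi0 : c i ≠ 0 := hi
    have : (0:ℚ) < c i * c i := mul_self_pos.mpr hi0
    refine Finset.sum_pos' (fun j _ => mul_self_nonneg _) ⟨i, Finset.mem_univ i, this⟩
  have : dotq (-c) c = - dotq c c := by
    simp only [dotq]
    rw [← Finset.sum_neg_distrib]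
    exact Finset.sum_congr rfl fun i _ => by simp only [Pi.neg_apply]; ring
  rw [this]; linarith

/-- membership in the cone generated by a list of vectors -/
def InCone (L : List (ι → ℚ)) (c : ι → ℚ) : Prop :=
  ∃ (n : ℕ) (g : Fin n → ι → ℚ) (f : Fin n → ℚ),
    (∀ i, g i ∈ L) ∧ (∀ i, 0 ≤ f i) ∧ c = ∑ i, f i • g i

end Farkas

section Farkas2
variable {ι : Type*} [Fintype ι]

lemma dotq_sub_smul_left (z y u : ι → ℚ) (a : ℚ) :
    dotq (z - a • y) u = dotq z u - a * dotq y u := by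
  rw [dotq_sub_left, dotq_smul_left]

lemma dotq_sub_smul_right (z y u : ι → ℚ) (a : ℚ) :
    dotq u (z - a • y) = dotq u z - a * dotq u y := by
  rw [dotq_sub_right, dotq_smul_right]

theorem farkasAux : ∀ (m : ℕ) (L : List (ι → ℚ)), L.length = m → ∀ c : ι → ℚ,
    InCone L c ∨ ∃ y : ι → ℚ, (∀ v ∈ L, 0 ≤ dotq y v) ∧ dotq y c < 0 := by
  intro m
  induction m with
  | zero =>
    intro L hL c
    rw [List.length_eq_zero_iff] at hL; subst hL
    by_cases hc : c = 0
    · left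
      exact ⟨0, Fin.elim0, Fin.elim0, fun i => i.elim0, fun i => i.elim0, by subst hc; simp⟩
    · right; exact ⟨-c, by simp, dotq_self_neg c hc⟩
  | succ m ih =>
    intro L hL c
    match L, hL with
    | v :: L', hL =>
    have hL' : L'.length = m := by simpa using hL
    rcases ih L' hL' c with h | ⟨y, hy, hyc⟩
    · left
      obtain ⟨n, g, f, hg, hf, hc⟩ := h
      exact ⟨n, g, f, fun i => List.mem_cons_of_mem _ (hg i), hf, hc⟩
    by_cases hyv : 0 ≤ dotq y v
    · right
      refine ⟨y, ?_, hyc⟩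
      intro w hw
      rcases List.mem_cons.mp hw with rfl | hw
      · exact hyv
      · exact hy w hw
    push_neg at hyv
    have hyvne : dotq y v ≠ 0 := ne_of_lt hyv
    set t : (ι → ℚ) → (ι → ℚ) := fun w => w - (dotq y w / dotq y v) • v with ht
    have htmem : ∀ u ∈ L', t u ∈ L'.map t := fun u hu => List.mem_map_of_mem hu
    have hmlen : (L'.map t).length = m := by simpa using hL'
    rcases ih (L'.map t) hmlen (t c) with h | ⟨z, hz, hzc⟩
    · left
      obtain ⟨n, g, f, hg, hf, hceq⟩ := h
      have hgw : ∀ i, ∃ u, u ∈ L' ∧ t u = g i := by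
        intro i; exact List.mem_map.mp (hg i)
      choose w hw htw using hgw
      -- rewrite hceq
      have hsum : ∑ i, f i • g i
          = (∑ i, f i • w i) - (∑ i, f i * (dotq y (w i) / dotq y v)) • v := by
        rw [Finset.sum_smul, ← Finset.sum_sub_distrib]
        refine Finset.sum_congr rfl fun i _ => ?_
        rw [← htw i, ht]
        simp only [smul_sub, smul_smul]
      set β : ℚ := dotq y c / dotq y v - ∑ i, f i * (dotq y (w i) / dotq y v) with hβ
      have hkey : c = (∑ i, f i • w i) + β • v := by
        have h1 : c - (dotq y c / dotq y v) • v
            = (∑ i, f i • w i) - (∑ i, f i * (dotq y (w i) / dotq y v)) • v := by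
          rw [← hsum, ← hceq]
        have h2 := eq_sub_of_add_eq (sub_eq_sub_iff_add_eq_add.mp h1)
        calc c = ((∑ i, f i • w i) + (dotq y c / dotq y v) • v)
              - (∑ i, f i * (dotq y (w i) / dotq y v)) • v := h2
          _ = (∑ i, f i • w i) + ((dotq y c / dotq y v) • v
              - (∑ i, f i * (dotq y (w i) / dotq y v)) • v) := by rw [add_sub_assoc]
          _ = (∑ i, f i • w i) + β • v := by simp only [hβ, sub_smul]
      have hβpos : 0 ≤ β := by
        have h1 : 0 < dotq y c / dotq y v := div_pos_of_neg_of_neg hyc hyv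
        have h2 : ∑ i, f i * (dotq y (w i) / dotq y v) ≤ 0 := by
          refine Finset.sum_nonpos fun i _ => ?_
          have hd : 0 ≤ dotq y (w i) := hy _ (hw i)
          have : dotq y (w i) / dotq y v ≤ 0 := div_nonpos_of_nonneg_of_nonpos hd hyv.le
          exact mul_nonpos_of_nonneg_of_nonpos (hf i) this
        rw [hβ]; linarith
      refine ⟨n + 1, Fin.snoc w v, Fin.snoc f β, ?_, ?_, ?_⟩
      · intro i
        refine Fin.lastCases ?_ ?_ i
        · simp only [Fin.snoc_last]; exact List.mem_cons_self
        · intro j; simp only [Fin.snoc_castSucc]; exact List.mem_cons_of_mem _ (hw j)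
      · intro i
        refine Fin.lastCases ?_ ?_ i
        · simp only [Fin.snoc_last]; exact hβpos
        · intro j; simp only [Fin.snoc_castSucc]; exact hf j
      · rw [Fin.sum_univ_castSucc]
        simp only [Fin.snoc_castSucc, Fin.snoc_last]
        exact hkey
    · right
      set w : ι → ℚ := z - (dotq z v / dotq y v) • y with hwdef
      have hwv : dotq w v = 0 := by
        rw [hwdef, dotq_sub_smul_left, div_mul_cancel₀ _ hyvne, sub_self]
      have hwu : ∀ u ∈ L', dotq w u = dotq z (t u) := by
        intro u hu
        rw [hwdef, dotq_sub_smul_left, ht]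
        simp only
        rw [dotq_sub_smul_right]
        ring
      refine ⟨w, ?_, ?_⟩
      · intro u hu
        rcases List.mem_cons.mp hu with rfl | hu
        · exact hwv.ge
        · rw [hwu u hu]; exact hz _ (htmem u hu)
      · have : dotq w c = dotq z (t c) := by
          rw [hwdef, dotq_sub_smul_left, ht]
          simp only
          rw [dotq_sub_smul_right]
          ring
        rw [this]; exact hzc

theorem farkas (L : List (ι → ℚ)) (c : ι → ℚ) :
    InCone L c ∨ ∃ y : ι → ℚ, (∀ v ∈ L, 0 ≤ dotq y v) ∧ dotq y c < 0 :=
  farkasAux L.length L rfl c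

end Farkas2


section ArchContra
variable {X D : Type*} [Fintype X] [PartialOrder D] (S : TSpace X) (P : PlausMeasure S D)

open scoped Classical in
lemma arch_contra (harch : IsArch S P.Pl) {n : ℕ} (p : Fin n → Finset X × Finset X)
    (hev1 : ∀ i, S.IsEvent (p i).1) (hev2 : ∀ i, S.IsEvent (p i).2)
    (hle : ∀ i, P.Pl (p i).1 ≤ P.Pl (p i).2)
    (m : Fin n → ℕ) (j : Fin n) (hj : 0 < m j) (hstrict : P.Pl (p j).1 < P.Pl (p j).2)
    (hcount : ∀ x : X, ∑ i, m i * (if x ∈ (p i).1 then 1 else 0)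
      = ∑ i, m i * (if x ∈ (p i).2 then (1:ℕ) else 0)) : False := by
  classical
  -- reduced multiplicities
  set m' : Fin n → ℕ := fun i => if i = j then m i - 1 else m i with hm'
  set I : Type _ := Σ i : Fin n, Fin (m' i) with hI
  set M : ℕ := Fintype.card I with hM
  set e : Fin M ≃ I := (Fintype.equivFin I).symm with he
  set A : Fin (M + 1) → Finset X := Fin.snoc (fun k => (p (e k).1).1) ((p j).1) with hA
  set B : Fin (M + 1) → Finset X := Fin.snoc (fun k => (p (e k).1).2) ((p j).2) with hB
  have hm'cast : ∀ i, (m' i : ℚ) = (m i : ℚ) - (if i = j then 1 else 0) := by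
    intro i
    by_cases h : i = j
    · subst h
      simp [hm', Nat.cast_sub (Nat.one_le_iff_ne_zero.mpr (Nat.pos_iff_ne_zero.mp hj))]
    · simp [hm', h]
  -- the generic count computation
  have hcountQ : ∀ (C : Fin n → Finset X) (cl : Finset X) (x : X),
      ((univ.filter fun i : Fin (M+1) => x ∈ (Fin.snoc (fun k => C (e k).1) cl : Fin (M+1) → Finset X) i).card : ℚ)
      = ∑ i, (m' i : ℚ) * (if x ∈ C i then 1 else 0) + (if x ∈ cl then 1 else 0) := by
    intro C cl x
    rw [Finset.card_filter]
    push_cast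
    rw [Fin.sum_univ_castSucc]
    congr 1
    · have h1 : (∑ k : Fin M, if x ∈ (Fin.snoc (fun k' => C (e k').1) cl : Fin (M+1) → Finset X)
          k.castSucc then (1:ℚ) else 0) = ∑ σ : I, if x ∈ C σ.1 then (1:ℚ) else 0 :=
        Fintype.sum_equiv e _ _ (fun k => by simp [Fin.snoc_castSucc])
      rw [h1, ← Finset.univ_sigma_univ, Finset.sum_sigma]
      refine Finset.sum_congr rfl fun i _ => ?_
      simp only [Finset.sum_ite_irrel, Finset.sum_const, Finset.card_univ, nsmul_eq_mul,
        mul_one, Finset.sum_const_zero, mul_zero, Fintype.card_fin, apply_ite (Nat.cast : ℕ → ℚ),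
        mul_ite]
      split_ifs <;> simp_all [hm']
    · simp [Fin.snoc_last]
  have key : ∀ x : X,
      (univ.filter fun i : Fin (M+1) => x ∈ A i).card
      = (univ.filter fun i : Fin (M+1) => x ∈ B i).card := by
    intro x
    have hQ : ((univ.filter fun i : Fin (M+1) => x ∈ A i).card : ℚ)
        = ((univ.filter fun i : Fin (M+1) => x ∈ B i).card : ℚ) := by
      have hA1 := hcountQ (fun i => (p i).1) ((p j).1) x
      have hB1 := hcountQ (fun i => (p i).2) ((p j).2) x
      rw [hA, hB, hA1, hB1]
      have expand : ∀ (C : Fin n → Finset X) (cl : Finset X), (cl = C j) →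
          ∑ i, (m' i : ℚ) * (if x ∈ C i then 1 else 0) + (if x ∈ cl then 1 else 0)
          = ∑ i, (m i : ℚ) * (if x ∈ C i then 1 else 0) := by
        intro C cl hcl
        subst hcl
        have : ∀ i, (m' i : ℚ) * (if x ∈ C i then 1 else 0)
            = (m i : ℚ) * (if x ∈ C i then 1 else 0)
              - (if i = j then (if x ∈ C i then (1:ℚ) else 0) else 0) := by
          intro i
          rw [hm'cast]
          split_ifs <;> ring
        rw [Finset.sum_congr rfl fun i _ => this i, Finset.sum_sub_distrib,
          Finset.sum_ite_eq' univ j (fun i => if x ∈ C i then (1:ℚ) else 0)]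
        simp
      rw [expand (fun i => (p i).1) ((p j).1) rfl, expand (fun i => (p i).2) ((p j).2) rfl]
      have := hcount x
      have : (∑ i, m i * (if x ∈ (p i).1 then 1 else 0) : ℚ)
          = (∑ i, m i * (if x ∈ (p i).2 then 1 else 0) : ℚ) := by
        exact_mod_cast congrArg (Nat.cast : ℕ → ℚ) this
      push_cast at this
      convert this using 2 <;> simp [apply_ite (Nat.cast : ℕ → ℚ)]
    exact_mod_cast hQ
  have := harch M A B
    (fun i => by
      refine Fin.lastCases ?_ ?_ i
      · rw [hA]; simp only [Fin.snoc_last]; exact hev1 j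
      · intro k; rw [hA]; simp only [Fin.snoc_castSucc]; exact hev1 _)
    (fun i => by
      refine Fin.lastCases ?_ ?_ i
      · rw [hB]; simp only [Fin.snoc_last]; exact hev2 j
      · intro k; rw [hB]; simp only [Fin.snoc_castSucc]; exact hev2 _)
    (fun x => key x)
    (fun k => by
      rw [hA, hB]; simp only [Fin.snoc_castSucc]; exact hle _)
  rw [hA, hB] at this
  simp only [Fin.snoc_last] at this
  exact lt_irrefl _ (lt_of_lt_of_le hstrict this)

end ArchContra


section Vectors
variable {X : Type*} [Fintype X]
open scoped Classical

noncomputable def vcore (p : Finset X × Finset X) : Option X → ℚ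
  | none => 0
  | some x => (if x ∈ p.2 then 1 else 0) - (if x ∈ p.1 then 1 else 0)

noncomputable def vstrict (p : Finset X × Finset X) : Option X → ℚ
  | none => -1
  | some x => (if x ∈ p.2 then 1 else 0) - (if x ∈ p.1 then 1 else 0)

noncomputable def cvec (X : Type*) : Option X → ℚ
  | none => -1
  | some _ => 0

lemma dotq_vcore (y : Option X → ℚ) (p : Finset X × Finset X) :
    dotq y (vcore p) = (∑ x ∈ p.2, y (some x)) - ∑ x ∈ p.1, y (some x) := by
  rw [dotq, Fintype.sum_option]
  simp only [vcore, mul_zero, zero_add, mul_sub, mul_ite, mul_one]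
  rw [Finset.sum_sub_distrib, Finset.sum_ite_mem, Finset.sum_ite_mem, Finset.univ_inter,
    Finset.univ_inter]

lemma dotq_vstrict (y : Option X → ℚ) (p : Finset X × Finset X) :
    dotq y (vstrict p) = (∑ x ∈ p.2, y (some x)) - (∑ x ∈ p.1, y (some x)) - y none := by
  rw [dotq, Fintype.sum_option]
  simp only [vstrict, mul_sub, mul_ite, mul_one, mul_neg, mul_zero]
  rw [Finset.sum_sub_distrib, Finset.sum_ite_mem, Finset.sum_ite_mem, Finset.univ_inter,
    Finset.univ_inter]
  ring

lemma dotq_cvec (y : Option X → ℚ) : dotq y (cvec X) = - y none := by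
  rw [dotq, Fintype.sum_option]
  simp [cvec]

end Vectors

section Backward
variable {X D : Type*} [Fintype X] [PartialOrder D] (S : TSpace X) (P : PlausMeasure S D)

open scoped Classical in
lemma backward (htot : ∀ A B : Finset X, S.IsEvent A → S.IsEvent B →
      P.Pl A ≤ P.Pl B ∨ P.Pl B ≤ P.Pl A) (harch : IsArch S P.Pl) :
    ∃ μ : X → ℝ, IsProbMeasure S μ ∧
      ∀ A B : Finset X, S.IsEvent A → S.IsEvent B →
        (P.Pl A ≤ P.Pl B ↔ mval μ A ≤ mval μ B) := by
  classical
  by_cases hne : S.tests.Nonempty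
  case neg =>
    refine ⟨fun _ => 0, ⟨fun x => le_refl 0, fun T hT => absurd ⟨T, hT⟩ hne⟩, ?_⟩
    intro A B hA _
    obtain ⟨T, hT, _⟩ := hA
    exact absurd ⟨T, hT⟩ hne
  obtain ⟨T0, hT0⟩ := hne
  set PLE : Finset (Finset X × Finset X) :=
    univ.filter (fun p => S.IsEvent p.1 ∧ S.IsEvent p.2 ∧ P.Pl p.1 ≤ P.Pl p.2) with hPLE
  set PLT : Finset (Finset X × Finset X) :=
    univ.filter (fun p => S.IsEvent p.1 ∧ S.IsEvent p.2 ∧ P.Pl p.1 < P.Pl p.2) with hPLT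
  set L : List (Option X → ℚ) := PLE.toList.map vcore ++ PLT.toList.map vstrict with hL
  rcases farkas L (cvec X) with hcone | ⟨y, hy, hyc⟩
  · -- Cone case: contradiction with Archimedean property
    exfalso
    obtain ⟨n, g, f, hg, hf, hsum⟩ := hcone
    have hchoice : ∀ i, ∃ (p : Finset X × Finset X) (b : Bool),
        S.IsEvent p.1 ∧ S.IsEvent p.2 ∧ P.Pl p.1 ≤ P.Pl p.2 ∧
        (b = true → P.Pl p.1 < P.Pl p.2) ∧ g i = (if b then vstrict p else vcore p) := by
      intro i
      have hgi := hg i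
      rw [hL, List.mem_append] at hgi
      rcases hgi with h | h
      · rw [List.mem_map] at h
        obtain ⟨q, hq, hgq⟩ := h
        rw [Finset.mem_toList, hPLE, Finset.mem_filter] at hq
        exact ⟨q, false, hq.2.1, hq.2.2.1, hq.2.2.2, by simp, by simp [hgq.symm]⟩
      · rw [List.mem_map] at h
        obtain ⟨q, hq, hgq⟩ := h
        rw [Finset.mem_toList, hPLT, Finset.mem_filter] at hq
        exact ⟨q, true, hq.2.1, hq.2.2.1, le_of_lt hq.2.2.2, fun _ => hq.2.2.2,
          by simp [hgq.symm]⟩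
    choose p b hev1 hev2 hle hblt hgeq using hchoice
    have happ : ∀ o, cvec X o = ∑ i, f i * g i o := by
      intro o
      have h := congrFun hsum o
      rw [Finset.sum_apply] at h
      simpa using h
    have hnone : ∀ i, g i none = if b i then -1 else 0 := by
      intro i; rw [hgeq i]; cases hbi : b i <;> simp [vstrict, vcore]
    have hsome : ∀ i x, g i (some x)
        = (if x ∈ (p i).2 then 1 else 0) - (if x ∈ (p i).1 then 1 else 0) := by
      intro i x; rw [hgeq i]; cases hbi : b i <;> simp [vstrict, vcore]
    have h1 : ∑ i, (if b i then f i else 0) = 1 := by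
      have h := happ none
      have h2 : ∀ i, f i * g i none = -(if b i then f i else 0) := by
        intro i; rw [hnone i]; cases hbi : b i <;> simp
      rw [Finset.sum_congr rfl (fun i _ => h2 i), Finset.sum_neg_distrib] at h
      have h3 : cvec X none = -1 := rfl
      rw [h3] at h
      linarith
    have hex : ∃ j, b j = true ∧ 0 < f j := by
      by_contra hcon
      push_neg at hcon
      have hz : ∀ i ∈ univ, (if b i then f i else 0) = (0:ℚ) := by
        intro i _
        by_cases hb : b i
        · simp only [hb, if_true]
          exact le_antisymm (hcon i hb) (hf i)
        · simp [hb]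
      rw [Finset.sum_eq_zero hz] at h1
      norm_num at h1
    obtain ⟨j, hbj, hfj⟩ := hex
    have hx : ∀ x, ∑ i, f i * ((if x ∈ (p i).2 then 1 else 0)
        - (if x ∈ (p i).1 then 1 else 0)) = 0 := by
      intro x
      have h := happ (some x)
      have h3 : cvec X (some x) = 0 := rfl
      rw [h3] at h
      rw [Finset.sum_congr rfl (fun i _ => by rw [hsome i x])] at h
      linarith
    -- integer scaling
    set N : ℕ := ∏ i, (f i).den with hN
    have hNpos : 0 < N := Finset.prod_pos fun i _ => (f i).pos
    set m : Fin n → ℕ := fun i => (f i).num.toNat * (N / (f i).den) with hm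
    have hcast : ∀ i, (m i : ℚ) = f i * N := by
      intro i
      have hdvd : (f i).den ∣ N := Finset.dvd_prod_of_mem _ (Finset.mem_univ i)
      have hdc : ((f i).den : ℚ) ≠ 0 := by exact_mod_cast (f i).den_nz
      have hnum : ((f i).num : ℚ) = f i * (f i).den := by
        have h := Rat.num_div_den (f i)
        rw [div_eq_iff hdc] at h
        linarith
      have hNd : ((f i).den : ℚ) * ((N / (f i).den : ℕ) : ℚ) = (N : ℚ) := by
        rw [← Nat.cast_mul, Nat.mul_div_cancel' hdvd]
      calc (m i : ℚ) = ((f i).num.toNat : ℚ) * ((N / (f i).den : ℕ) : ℚ) := by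
            rw [hm]; push_cast; ring
        _ = ((f i).num : ℚ) * ((N / (f i).den : ℕ) : ℚ) := by
            congr 1
            exact_mod_cast congrArg (Int.cast : ℤ → ℚ)
              (Int.toNat_of_nonneg (Rat.num_nonneg.mpr (hf i)))
        _ = f i * (((f i).den : ℚ) * ((N / (f i).den : ℕ) : ℚ)) := by rw [hnum]; ring
        _ = f i * N := by rw [hNd]
    have hmj : 0 < m j := by
      have : (0:ℚ) < (m j : ℚ) := by
        rw [hcast j]
        have : (0:ℚ) < (N:ℚ) := by exact_mod_cast hNpos
        positivity
      exact_mod_cast this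
    have hcountN : ∀ x : X, ∑ i, m i * (if x ∈ (p i).1 then 1 else 0)
        = ∑ i, m i * (if x ∈ (p i).2 then (1:ℕ) else 0) := by
      intro x
      have hQ : ∑ i, (m i : ℚ) * (if x ∈ (p i).1 then 1 else 0)
          = ∑ i, (m i : ℚ) * (if x ∈ (p i).2 then (1:ℚ) else 0) := by
        have h := hx x
        have h2 : ∑ i, (f i * N) * ((if x ∈ (p i).2 then 1 else 0)
            - (if x ∈ (p i).1 then (1:ℚ) else 0)) = 0 := by
          have h3 : ∑ i, (f i * N) * ((if x ∈ (p i).2 then 1 else 0)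
              - (if x ∈ (p i).1 then (1:ℚ) else 0))
              = (∑ i, f i * ((if x ∈ (p i).2 then 1 else 0)
                - (if x ∈ (p i).1 then (1:ℚ) else 0))) * N := by
            rw [Finset.sum_mul]
            exact Finset.sum_congr rfl fun i _ => by ring
          rw [h3, h, zero_mul]
        have e1 : ∑ i, (m i : ℚ) * (if x ∈ (p i).1 then 1 else 0)
            = ∑ i, (f i * N) * (if x ∈ (p i).1 then (1:ℚ) else 0) :=
          Finset.sum_congr rfl fun i _ => by rw [hcast i]
        have e2 : ∑ i, (m i : ℚ) * (if x ∈ (p i).2 then 1 else 0)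
            = ∑ i, (f i * N) * (if x ∈ (p i).2 then (1:ℚ) else 0) :=
          Finset.sum_congr rfl fun i _ => by rw [hcast i]
        rw [e1, e2, ← sub_eq_zero, ← Finset.sum_sub_distrib]
        have h4 : ∑ i, ((f i * N) * (if x ∈ (p i).1 then (1:ℚ) else 0)
            - (f i * N) * (if x ∈ (p i).2 then (1:ℚ) else 0))
            = - ∑ i, (f i * N) * ((if x ∈ (p i).2 then 1 else 0)
              - (if x ∈ (p i).1 then (1:ℚ) else 0)) := by
          rw [← Finset.sum_neg_distrib]
          exact Finset.sum_congr rfl fun i _ => by ring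
        rw [h4, h2, neg_zero]
      have := hQ
      exact_mod_cast (by push_cast; convert this using 2 <;> simp [apply_ite (Nat.cast : ℕ → ℚ)] :
        ((∑ i, m i * (if x ∈ (p i).1 then 1 else 0) : ℕ) : ℚ)
        = ((∑ i, m i * (if x ∈ (p i).2 then (1:ℕ) else 0) : ℕ) : ℚ))
    exact arch_contra S P harch p hev1 hev2 hle m j hmj (hblt j hbj) hcountN
  · -- Separating functional case: build the probability measure
    set q : X → ℚ := fun x => y (some x) with hq
    have hEps : 0 < y none := by
      rw [dotq_cvec] at hyc
      linarith
    have hLE : ∀ A B : Finset X, S.IsEvent A → S.IsEvent B → P.Pl A ≤ P.Pl B →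
        (∑ x ∈ A, q x) ≤ ∑ x ∈ B, q x := by
      intro A B hA hB hAB
      have hmem : vcore (A, B) ∈ L := by
        rw [hL, List.mem_append]
        left
        rw [List.mem_map]
        exact ⟨(A, B), Finset.mem_toList.mpr (Finset.mem_filter.mpr
          ⟨Finset.mem_univ _, hA, hB, hAB⟩), rfl⟩
      have h := hy _ hmem
      rw [dotq_vcore] at h
      simp only at h
      linarith
    have hLT : ∀ A B : Finset X, S.IsEvent A → S.IsEvent B → P.Pl A < P.Pl B →
        (∑ x ∈ A, q x) < ∑ x ∈ B, q x := by
      intro A B hA hB hAB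
      have hmem : vstrict (A, B) ∈ L := by
        rw [hL, List.mem_append]
        right
        rw [List.mem_map]
        exact ⟨(A, B), Finset.mem_toList.mpr (Finset.mem_filter.mpr
          ⟨Finset.mem_univ _, hA, hB, hAB⟩), rfl⟩
      have h := hy _ hmem
      rw [dotq_vstrict] at h
      simp only at h
      linarith
    have hEvEmpty : S.IsEvent ∅ := ⟨T0, hT0, Finset.empty_subset _⟩
    have hEvSingle : ∀ x : X, S.IsEvent {x} := by
      intro x
      obtain ⟨T, hT, hx⟩ := S.covers x
      exact ⟨T, hT, Finset.singleton_subset_iff.mpr hx⟩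
    have hEvTest : ∀ T ∈ S.tests, S.IsEvent T := fun T hT => ⟨T, hT, subset_rfl⟩
    have hq0 : ∀ x, 0 ≤ q x := by
      intro x
      have h := hLE ∅ {x} hEvEmpty (hEvSingle x)
        (P.mono ∅ {x} (hEvSingle x) (Finset.empty_subset _))
      simpa using h
    set s : ℚ := ∑ x ∈ T0, q x with hs
    have hspos : 0 < s := by
      have h := hLT ∅ T0 hEvEmpty (hEvTest T0 hT0) (P.pos T0 hT0)
      simpa using h
    have hTs : ∀ T ∈ S.tests, ∑ x ∈ T, q x = s := by
      intro T hT
      have h1 := P.eq_tests T hT T0 hT0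
      have h2 := hLE T T0 (hEvTest T hT) (hEvTest T0 hT0) (le_of_eq h1)
      have h3 := hLE T0 T (hEvTest T0 hT0) (hEvTest T hT) (le_of_eq h1.symm)
      rw [hs]
      linarith
    have hsR : (0:ℝ) < (s:ℝ) := by exact_mod_cast hspos
    have hcastm : ∀ C : Finset X, mval (fun x => (q x : ℝ) / (s : ℝ)) C
        = ((∑ x ∈ C, q x : ℚ) : ℝ) / (s : ℝ) := by
      intro C
      rw [mval, ← Finset.sum_div]
      push_cast
      rfl
    refine ⟨fun x => (q x : ℝ) / (s:ℝ), ⟨?_, ?_⟩, ?_⟩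
    · intro x
      have : (0:ℝ) ≤ (q x : ℝ) := by exact_mod_cast hq0 x
      positivity
    · intro T hT
      rw [← Finset.sum_div]
      have : (∑ x ∈ T, (q x : ℝ)) = ((∑ x ∈ T, q x : ℚ) : ℝ) := by push_cast; rfl
      rw [this, hTs T hT]
      field_simp
    · intro A B hA hB
      rw [hcastm, hcastm]
      constructor
      · intro h
        have := hLE A B hA hB h
        exact (div_le_div_iff_of_pos_right hsR).mpr (by exact_mod_cast this)
      · intro h
        by_contra hPl
        rcases htot A B hA hB with h' | h'
        · exact hPl h'
        have hne2 : P.Pl B ≠ P.Pl A := fun heq => hPl (le_of_eq heq.symm)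
        have hlt : P.Pl B < P.Pl A := lt_of_le_of_ne h' hne2
        have h3 := hLT B A hB hA hlt
        have h4 : ((∑ x ∈ B, q x : ℚ) : ℝ) < ((∑ x ∈ A, q x : ℚ) : ℝ) := by exact_mod_cast h3
        have h5 := (div_le_div_iff_of_pos_right hsR).mp h
        exact absurd h5 (not_le.mpr h4)

end Backward

section Forward
variable {X D : Type*} [Fintype X] [PartialOrder D] (S : TSpace X) (P : PlausMeasure S D)

open scoped Classical in
lemma forward (μ : X → ℝ) (hμ : IsProbMeasure S μ)
    (hiff : ∀ A B : Finset X, S.IsEvent A → S.IsEvent B →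
      (P.Pl A ≤ P.Pl B ↔ mval μ A ≤ mval μ B)) :
    (∀ A B : Finset X, S.IsEvent A → S.IsEvent B →
        P.Pl A ≤ P.Pl B ∨ P.Pl B ≤ P.Pl A) ∧ IsArch S P.Pl := by
  classical
  constructor
  · intro A B hA hB
    rcases le_total (mval μ A) (mval μ B) with h | h
    · exact Or.inl ((hiff A B hA hB).mpr h)
    · exact Or.inr ((hiff B A hB hA).mpr h)
  · intro n A B hevA hevB hcount hprem
    refine (hiff _ _ (hevB _) (hevA _)).mpr ?_
    have key : ∀ (C : Fin (n+1) → Finset X), ∑ i, mval μ (C i)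
        = ∑ x : X, ((univ.filter fun i => x ∈ C i).card : ℝ) * μ x := by
      intro C
      have h1 : ∀ i : Fin (n+1), mval μ (C i) = ∑ x : X, if x ∈ C i then μ x else 0 := by
        intro i
        rw [mval]
        have h0 := Finset.sum_ite_mem univ (C i) μ
        rw [Finset.univ_inter] at h0
        exact h0.symm
      rw [Finset.sum_congr rfl fun i _ => h1 i, Finset.sum_comm]
      refine Finset.sum_congr rfl fun x _ => ?_
      rw [← Finset.sum_filter, Finset.sum_const, nsmul_eq_mul]
    have hsums : ∑ i, mval μ (A i) = ∑ i, mval μ (B i) := by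
      rw [key A, key B]
      exact Finset.sum_congr rfl fun x _ => by rw [hcount x]
    rw [Fin.sum_univ_castSucc, Fin.sum_univ_castSucc] at hsums
    have hle : ∑ i : Fin n, mval μ (A i.castSucc) ≤ ∑ i : Fin n, mval μ (B i.castSucc) :=
      Finset.sum_le_sum fun i _ => (hiff _ _ (hevA _) (hevB _)).mp (hprem i)
    linarith

end Forward


/-- Main theorem, finite case: a plausibility measure on a finite test space agrees with
some probability measure iff its image is totally ordered and it is Archimedean. -/
theorem stmt13 {X D : Type*} [Fintype X] [PartialOrder D] (S : TSpace X)
    (P : PlausMeasure S D) :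
    (∃ μ : X → ℝ, IsProbMeasure S μ ∧
      ∀ A B : Finset X, S.IsEvent A → S.IsEvent B →
        (P.Pl A ≤ P.Pl B ↔ mval μ A ≤ mval μ B)) ↔
    ((∀ A B : Finset X, S.IsEvent A → S.IsEvent B →
        P.Pl A ≤ P.Pl B ∨ P.Pl B ≤ P.Pl A) ∧ IsArch S P.Pl) := by
  constructor
  · rintro ⟨μ, hμ, hiff⟩
    exact forward S P μ hμ hiff
  · rintro ⟨htot, harch⟩
    exact backward S P htot harch
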